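/- Let L be a standard Borel space with a probability measure ν and let f : L → L be a Borel map all of whose fibers f⁻¹(x) are countable. For u ∈ L set E(u) = ⋃_{k ≥ 1} f^{-k}(u). Let ε > 0 and let v ∈ L be such that ν(E(v)) > ε, and assume that no element of {v} ∪ E(v) is periodic (f^k(x) ≠ x for all x ∈ {v} ∪ E(v) and all k ≥ 1). Then there exists u ∈ {v} ∪ E(v) such that ν(E(u)) > ε and ν(E(x)) ≤ ε for every x ∈ f⁻¹(u). -/

import Mathlib

open FirstOrder Language Filter Topology Set
open MeasureTheory (Measure IsProbabilityMeasure)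
open scoped ENNReal NNReal

namespace MapApprox

/-- The mapping signature: one unary function symbol and `c` unary relation symbols. -/
def mapLang (c : ℕ) : FirstOrder.Language :=
  ⟨fun n => match n with | 1 => Unit | _ => Empty,
   fun n => match n with | 1 => Fin c | _ => Empty⟩

/-- The unary function symbol. -/
def fsym (c : ℕ) : (mapLang c).Functions 1 := Unit.unit

/-- The `k`-th unary relation symbol. -/
def rsym (c : ℕ) (k : Fin c) : (mapLang c).Relations 1 := k

/-- The interpretation of the function symbol in a mapping. -/
def fmap (c : ℕ) (M : Type*) [(mapLang c).Structure M] : M → M :=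
  fun x => Structure.funMap (fsym c) ![x]

/-- The interpretation of the `k`-th unary relation in a mapping. -/
def relP (c : ℕ) {M : Type*} [(mapLang c).Structure M] (k : Fin c) (x : M) : Prop :=
  Structure.RelMap (rsym c k) ![x]

/-- The Stone pairing of a formula with a structure equipped with a probability measure. -/
noncomputable def modPairing (c p : ℕ) (M : Type*) [MeasurableSpace M]
    [(mapLang c).Structure M] (ν : Measure M) (φ : (mapLang c).Formula (Fin p)) : ℝ :=
  ((Measure.pi fun _ : Fin p => ν) {v : Fin p → M | φ.Realize v}).toReal

/-- The Stone pairing of a formula with a finite structure (uniform measure). -/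
noncomputable def finPairing (c p : ℕ) (F : Type*) [Fintype F]
    [(mapLang c).Structure F] (φ : (mapLang c).Formula (Fin p)) : ℝ :=
  (Set.ncard {v : Fin p → F | φ.Realize v} : ℝ) / (Fintype.card F : ℝ) ^ p

/-- A structure on a measurable space is a modeling if every definable set is measurable. -/
def IsModeling (c : ℕ) (M : Type*) [MeasurableSpace M] [(mapLang c).Structure M] : Prop :=
  ∀ (p : ℕ) (φ : (mapLang c).Formula (Fin p)), MeasurableSet {v : Fin p → M | φ.Realize v}

/-- A measure is atomless if every singleton has measure zero. -/
def Atomless {M : Type*} [MeasurableSpace M] (ν : Measure M) : Prop :=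
  ∀ v : M, ν {v} = 0

/-- The Finitary Mass Transport Principle for a map `f` and a measure `ν`. -/
def FMTP {X : Type*} [MeasurableSpace X] (f : X → X) (ν : Measure X) : Prop :=
  ν {x | (f ⁻¹' {x}).Infinite} = 0 ∧
    ∀ A B : Set X, MeasurableSet A → MeasurableSet B →
      A ⊆ {x | (f ⁻¹' {x}).Finite} → B ⊆ {x | (f ⁻¹' {x}).Finite} →
      ν (A ∩ f ⁻¹' B) = ∫⁻ y in B, ((f ⁻¹' {y} ∩ A).encard : ℝ≥0∞) ∂ν

/-- The finite model property: every sentence satisfied by `M` has a finite model. -/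
def HasFMP (c : ℕ) (M : Type*) [(mapLang c).Structure M] : Prop :=
  ∀ θ : (mapLang c).Sentence, Sentence.Realize M θ →
    ∃ (F : Type) (st : (mapLang c).Structure F), Finite F ∧ @Sentence.Realize _ F st θ

/-- A bundled mapping modeling. -/
structure MMod (c : ℕ) where
  carrier : Type
  [ms : MeasurableSpace carrier]
  [sb : StandardBorelSpace carrier]
  [st : (mapLang c).Structure carrier]
  ν : Measure carrier
  prob : IsProbabilityMeasure ν
  borel : IsModeling c carrier

attribute [instance] MMod.ms MMod.sb MMod.st

/-- A bundled finite mapping. -/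
structure FinMapping (c : ℕ) where
  carrier : Type
  [fin : Fintype carrier]
  [st : (mapLang c).Structure carrier]

attribute [instance] FinMapping.fin FinMapping.st

/-- `x` belongs to the `r`-ball of `u` in the Gaifman graph of a mapping with function `f`. -/
def ballMem {M : Type*} (f : M → M) (r : ℕ) (u x : M) : Prop :=
  ∃ a b : ℕ, a + b ≤ r ∧ f^[a] u = f^[b] x

/-- The union of the `r`-balls around the entries of a tuple. -/
def tupleBall {M : Type*} {p : ℕ} (f : M → M) (r : ℕ) (u : Fin p → M) : Set M :=
  {x | ∃ i, ballMem f r (u i) x}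

/-- `g` is an isomorphism between the `r`-balls of the tuples `u` and `v`. -/
def BallIso (c : ℕ) {p : ℕ} (r : ℕ) (M N : Type*)
    [(mapLang c).Structure M] [(mapLang c).Structure N]
    (u : Fin p → M) (v : Fin p → N) (g : M → N) : Prop :=
  Set.BijOn g (tupleBall (fmap c M) r u) (tupleBall (fmap c N) r v) ∧
    (∀ i, g (u i) = v i) ∧
    (∀ x ∈ tupleBall (fmap c M) r u, ∀ k : Fin c, (relP c k x ↔ relP c k (g x))) ∧
    (∀ x ∈ tupleBall (fmap c M) r u, ∀ y ∈ tupleBall (fmap c M) r u,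
      (fmap c M x = y ↔ fmap c N (g x) = g y))

/-- A formula is `r`-local if its satisfaction only depends on the isomorphism type of the
`r`-balls around its free variables. -/
def IsRLocal (c p : ℕ) (r : ℕ) (φ : (mapLang c).Formula (Fin p)) : Prop :=
  ∀ (M N : Type) [(mapLang c).Structure M] [(mapLang c).Structure N]
    (u : Fin p → M) (v : Fin p → N) (g : M → N),
    BallIso c r M N u v g → (φ.Realize u ↔ φ.Realize v)

/-- A formula is local if it is `r`-local for some `r`. -/
def IsLocalFormula (c p : ℕ) (φ : (mapLang c).Formula (Fin p)) : Prop :=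
  ∃ r, IsRLocal c p r φ

/-- A term is clean if it involves no composition of function symbols. -/
def TermClean {c : ℕ} {α : Type*} : (mapLang c).Term α → Prop
  | FirstOrder.Language.Term.var _ => True
  | FirstOrder.Language.Term.func _ ts => ∀ i, ∃ a, ts i = FirstOrder.Language.Term.var a

/-- A formula is clean if all its terms are clean. -/
def FormulaClean {c : ℕ} {α : Type*} :
    ∀ {n : ℕ}, (mapLang c).BoundedFormula α n → Prop
  | _, FirstOrder.Language.BoundedFormula.falsum => True
  | _, FirstOrder.Language.BoundedFormula.equal t₁ t₂ => TermClean t₁ ∧ TermClean t₂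
  | _, FirstOrder.Language.BoundedFormula.rel _ ts => ∀ i, TermClean (ts i)
  | _, FirstOrder.Language.BoundedFormula.imp φ ψ => FormulaClean φ ∧ FormulaClean ψ
  | _, FirstOrder.Language.BoundedFormula.all φ => FormulaClean φ

/-- The number of nested quantifiers of a formula. -/
def qdepth {c : ℕ} {α : Type*} : ∀ {n : ℕ}, (mapLang c).BoundedFormula α n → ℕ
  | _, FirstOrder.Language.BoundedFormula.falsum => 0
  | _, FirstOrder.Language.BoundedFormula.equal _ _ => 0
  | _, FirstOrder.Language.BoundedFormula.rel _ _ => 0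
  | _, FirstOrder.Language.BoundedFormula.imp φ ψ => max (qdepth φ) (qdepth ψ)
  | _, FirstOrder.Language.BoundedFormula.all φ => qdepth φ + 1

/-- The quantifier rank of a formula: the least number of nested quantifiers of a clean formula
logically equivalent to it. -/
noncomputable def qrank {c : ℕ} {α : Type*} (φ : (mapLang c).Formula α) : ℕ :=
  sInf {d | ∃ ψ : (mapLang c).Formula α, FormulaClean ψ ∧ qdepth ψ ≤ d ∧
    ∀ (M : Type) [(mapLang c).Structure M] (w : α → M), (φ.Realize w ↔ ψ.Realize w)}

/-- `M ≡_r N` : `M` and `N` satisfy the same sentences of quantifier rank at most `r`. -/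
def ElemEquiv (c r : ℕ) (M N : Type*) [(mapLang c).Structure M] [(mapLang c).Structure N] :
    Prop :=
  ∀ θ : (mapLang c).Sentence, qrank θ ≤ r →
    (Sentence.Realize M θ ↔ Sentence.Realize N θ)

/-- `dist_p^r(M,N)`: the supremum of `|⟨φ,M⟩ - ⟨φ,N⟩|` over formulas `φ` with `p` free
variables and quantifier rank at most `r`. -/
noncomputable def distPR (c p r : ℕ) (M N : Type*) [MeasurableSpace M] [MeasurableSpace N]
    [(mapLang c).Structure M] [(mapLang c).Structure N]
    (νM : Measure M) (νN : Measure N) : ℝ :=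
  ⨆ φ : {φ : (mapLang c).Formula (Fin p) // qrank φ ≤ r},
    |modPairing c p M νM φ.1 - modPairing c p N νN φ.1|

/-- `ldist_p^r(M,N)`: the supremum of `|⟨φ,M⟩ - ⟨φ,N⟩|` over local formulas `φ` with `p` free
variables and local rank at most `r`. -/
noncomputable def ldistPR (c p r : ℕ) (M N : Type*) [MeasurableSpace M] [MeasurableSpace N]
    [(mapLang c).Structure M] [(mapLang c).Structure N]
    (νM : Measure M) (νN : Measure N) : ℝ :=
  ⨆ φ : {φ : (mapLang c).Formula (Fin p) // IsRLocal c p r φ},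
    |modPairing c p M νM φ.1 - modPairing c p N νN φ.1|

/-- The Stone pairing of the formula `dist(x₁,x₂) ≤ r` with a modeling. -/
noncomputable def deltaPairing (c r : ℕ) (M : Type*) [MeasurableSpace M]
    [(mapLang c).Structure M] (ν : Measure M) : ℝ :=
  ((Measure.pi fun _ : Fin 2 => ν)
    {v : Fin 2 → M | ballMem (fmap c M) r (v 0) (v 1)}).toReal

end MapApprox

namespace MapApprox

open FirstOrder Language Filter Topology Set
open MeasureTheory (Measure IsProbabilityMeasure)
open scoped ENNReal

/-! ### Local types -/

/-- A set of formulas in one free variable, thought of as a candidate local type. -/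
abbrev TypeSet (c : ℕ) := Set ((mapLang c).Formula (Fin 1))

/-- The rank-`r` local type of an element: the set of `r`-local formulas it satisfies. -/
def localTypeOf (c r : ℕ) (M : Type*) [(mapLang c).Structure M] (x : M) : TypeSet c :=
  {φ | IsRLocal c 1 r φ ∧ φ.Realize (fun _ => x)}

/-- A set of formulas is a rank-`r` local type if it is realized in some mapping. -/
def IsLocalType (c r : ℕ) (T : TypeSet c) : Prop :=
  ∃ (M : Type) (_ : (mapLang c).Structure M) (x : M), T = localTypeOf c r M x

/-- The projection of a local type to its rank-`r` part. -/
def projType (c r : ℕ) (T : TypeSet c) : TypeSet c :=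
  {φ | φ ∈ T ∧ IsRLocal c 1 r φ}

/-- `admPlus c R r τ t = 1` iff the rank-`R` local type `τ` of an element forces its image to
have rank-`r` local type `t`, and `0` otherwise. -/
noncomputable def admPlus (c R r : ℕ) (τ t : TypeSet c) : ℕ :=
  letI := Classical.propDecidable
  if (∀ (M : Type) [(mapLang c).Structure M] (x : M),
      localTypeOf c R M x = τ → localTypeOf c r M (fmap c M x) = t) then 1 else 0

/-- `admMinus c R r τ t` : the largest `a ≤ r+1` such that the rank-`R` local type `τ` of an
element forces it to have at least `a` preimages of rank-`r` local type `t`. -/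
noncomputable def admMinus (c R r : ℕ) (τ t : TypeSet c) : ℕ :=
  sSup {a : ℕ | a ≤ r + 1 ∧ ∀ (M : Type) [(mapLang c).Structure M] (x : M),
    localTypeOf c R M x = τ →
      (a : ℕ∞) ≤ ({u : M | fmap c M u = x ∧ localTypeOf c r M u = t}).encard}

/-- The `(R,r)`-restricted finitary mass transport principle for a (finitely supported)
probability distribution `ρ` on rank-`R` local types. -/
def RestrictedFMTP (c R r : ℕ) (ρ : TypeSet c → ℝ) : Prop :=
  ∃ s : TypeSet c → TypeSet c → ℝ,
    (∀ τ t, 0 < ρ τ → (∃ τ', 0 < ρ τ' ∧ projType c r τ' = t) →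
      (((∃ k : ℕ, k ≤ r ∧ s τ t = (k : ℝ)) ∨ (r : ℝ) < s τ t) ∧
        min (r : ℝ) (admMinus c R r τ t : ℝ) = min (r : ℝ) (s τ t))) ∧
    ∀ t₁ t₂ : TypeSet c,
      (∃ τ, 0 < ρ τ ∧ projType c r τ = t₁) → (∃ τ, 0 < ρ τ ∧ projType c r τ = t₂) →
      (∑ᶠ τ₁ ∈ {τ | 0 < ρ τ ∧ projType c r τ = t₁}, (admPlus c R r τ₁ t₂ : ℝ) * ρ τ₁) =
      (∑ᶠ τ₂ ∈ {τ | 0 < ρ τ ∧ projType c r τ = t₂}, s τ₂ t₁ * ρ τ₂)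

/-! ### Atomic formulas -/

/-- The formula `f^ℓ(x) = x`. -/
def iterEqFormula (c : ℕ) (ℓ : ℕ) : (mapLang c).Formula (Fin 1) :=
  Term.equal ((fun t => Functions.apply₁ (fsym c) t)^[ℓ] (Term.var (0 : Fin 1)))
    (Term.var (0 : Fin 1))

/-- The atomic formula `M_k(x)`. -/
def relFormula (c : ℕ) (k : Fin c) : (mapLang c).Formula (Fin 1) :=
  Relations.formula₁ (rsym c k) (Term.var (0 : Fin 1))

/-! ### Restrictions, marking, and miscellaneous definitions -/

/-- The subset of a structure defined by a formula with one free variable. -/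
def defSet (c : ℕ) (M : Type*) [(mapLang c).Structure M] (φ : (mapLang c).Formula (Fin 1)) :
    Set M := {x | φ.Realize (fun _ => x)}

/-- The function of the restriction of a mapping to a subset `X`. -/
noncomputable def restrictFun (c : ℕ) (M : Type*) [(mapLang c).Structure M] (X : Set M) :
    X → X := fun v =>
  letI := Classical.propDecidable
  if h : fmap c M v.1 ∈ X then ⟨fmap c M v.1, h⟩ else v

/-- The normalized restriction of a measure to a subset. -/
noncomputable def restrictMeasure {M : Type*} [MeasurableSpace M] (ν : Measure M) (X : Set M) :
    Measure X := (ν X)⁻¹ • MeasureTheory.Measure.comap Subtype.val ν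

/-- Marking one element `m` with a new unary relation: the resulting structure for the
signature with one extra unary relation. -/
def extStructure (c : ℕ) (M : Type*) [(mapLang c).Structure M] (m : M) :
    (mapLang (c + 1)).Structure M where
  funMap {n} f v :=
    match n, f, v with
    | 1, _, v => fmap c M (v 0)
  RelMap {n} k v :=
    match n, k, v with
    | 1, k, v =>
        letI := Classical.propDecidable
        let k' : Fin (c + 1) := k
        if h : (k' : ℕ) < c then relP c ⟨(k' : ℕ), h⟩ (v 0) else v 0 = m

/-- A mapping is connected when any two elements are joined in the Gaifman graph. -/
def ConnectedMap {M : Type*} (f : M → M) : Prop :=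
  ∀ u v : M, ∃ a b : ℕ, f^[a] u = f^[b] v

/-- The set of vertices lying on an undirected path of length at least `d+1` with endpoint
`rt` in the digraph `E`. -/
def pathSet {M : Type*} (E : M → M → Prop) (rt : M) (d : ℕ) : Set M :=
  {x | ∃ (n : ℕ) (w : ℕ → M), d + 1 ≤ n ∧ w 0 = rt ∧
    (∀ i ≤ n, ∀ j ≤ n, w i = w j → i = j) ∧
    (∀ i < n, E (w i) (w (i + 1)) ∨ E (w (i + 1)) (w i)) ∧
    ∃ i ≤ n, w i = x}

/-- `E(u)`: the set of iterated preimages of `u`. -/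
def iterPreimages {L : Type*} (f : L → L) (u : L) : Set L :=
  ⋃ k ∈ {k : ℕ | 1 ≤ k}, (f^[k]) ⁻¹' {u}

end MapApprox

namespace MapApprox

open Filter Topology Set
open MeasureTheory (Measure IsProbabilityMeasure)
open scoped ENNReal

lemma mem_iterPreimages_iff {L : Type*} (f : L → L) (u x : L) :
    x ∈ iterPreimages f u ↔ ∃ k, 1 ≤ k ∧ f^[k] x = u := by
  simp [iterPreimages]

/-- If `ν(E(v)) > ε` and no element of `{v} ∪ E(v)` is periodic, then there
is `u ∈ {v} ∪ E(v)` with `ν(E(u)) > ε` while `ν(E(x)) ≤ ε` for every preimage `x` of `u`. -/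
theorem exists_minimal_heavy_preimage_tree (L : Type) [MeasurableSpace L]
    [StandardBorelSpace L] (ν : Measure L) [IsProbabilityMeasure ν]
    (f : L → L) (hf : Measurable f) (hfib : ∀ x : L, (f ⁻¹' {x}).Countable)
    (ε : ℝ) (hε : 0 < ε) (v : L)
    (hv : ENNReal.ofReal ε < ν (iterPreimages f v))
    (hper : ∀ x ∈ insert v (iterPreimages f v), ∀ k : ℕ, 1 ≤ k → f^[k] x ≠ x) :
    ∃ u ∈ insert v (iterPreimages f v),
      ENNReal.ofReal ε < ν (iterPreimages f u) ∧
        ∀ x : L, f x = u → ν (iterPreimages f x) ≤ ENNReal.ofReal ε := by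
  classical
  letI := upgradeStandardBorel L
  by_contra hcon
  push_neg at hcon
  set Q : L → Prop := fun u =>
    u ∈ insert v (iterPreimages f v) ∧ ENNReal.ofReal ε < ν (iterPreimages f u) with hQ
  have hQv : Q v := ⟨mem_insert _ _, hv⟩
  have step : ∀ u, Q u → ∃ x, f x = u ∧ Q x := by
    rintro u ⟨hu, hνu⟩
    obtain ⟨x, hx, hνx⟩ := hcon u hu hνu
    refine ⟨x, hx, Or.inr ?_, hνx⟩
    rw [mem_iterPreimages_iff]
    rcases hu with rfl | hu
    · exact ⟨1, le_refl 1, by simpa using hx⟩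
    · obtain ⟨k, hk, hkx⟩ := (mem_iterPreimages_iff f v u).1 hu
      exact ⟨k + 1, le_add_self, by
        rw [Function.iterate_succ_apply, hx]; exact hkx⟩
  choose g hg1 hg2 using step
  let seq : ℕ → {x : L // Q x} := fun n =>
    n.rec ⟨v, hQv⟩ (fun _ p => ⟨g p.1 p.2, hg2 p.1 p.2⟩)
  have hstep : ∀ n, f (seq (n + 1)).1 = (seq n).1 := fun n => hg1 _ _
  have hiter : ∀ n, f^[n] (seq n).1 = v := by
    intro n
    induction n with
    | zero => rfl
    | succ n ih => rw [Function.iterate_succ_apply, hstep n]; exact ih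
  have hmeas : ∀ u : L, MeasurableSet (iterPreimages f u) := by
    intro u
    exact MeasurableSet.biUnion (to_countable _)
      (fun k _ => (hf.iterate k) (measurableSet_singleton u))
  have hanti : Antitone (fun n => iterPreimages f (seq n).1) := by
    refine antitone_nat_of_succ_le ?_
    intro n x hx
    rw [mem_iterPreimages_iff] at hx ⊢
    obtain ⟨k, hk, hkx⟩ := hx
    exact ⟨k + 1, le_add_self, by
      rw [Function.iterate_succ_apply', hkx, hstep n]⟩
  have hinter : ENNReal.ofReal ε ≤ ν (⋂ n, iterPreimages f (seq n).1) := by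
    rw [Directed.measure_iInter
      (fun n => (hmeas _).nullMeasurableSet) hanti.directed_ge
      ⟨0, MeasureTheory.measure_ne_top ν _⟩]
    exact le_iInf fun n => le_of_lt (seq n).2.2
  have hne : (⋂ n, iterPreimages f (seq n).1).Nonempty := by
    apply MeasureTheory.nonempty_of_measure_ne_zero (μ := ν)
    intro h0
    rw [h0] at hinter
    exact absurd (le_antisymm hinter zero_le)
      (ne_of_gt (ENNReal.ofReal_pos.mpr hε))
  obtain ⟨x, hx⟩ := hne
  obtain ⟨j0, hj0, hj0x⟩ := (mem_iterPreimages_iff f _ x).1 (mem_iInter.1 hx 0)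
  obtain ⟨j, hj, hjx⟩ := (mem_iterPreimages_iff f _ x).1 (mem_iInter.1 hx j0)
  have h1 : f^[j0 + j] x = v := by
    rw [Function.iterate_add_apply, hjx, hiter j0]
  have h2 : f^[j] v = v := by
    have := Function.iterate_add_apply f j j0 x
    rw [add_comm j j0, h1, hj0x] at this
    exact this.symm
  exact hper v (mem_insert _ _) j hj h2

end MapApprox
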